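/- Let (R, i, χ) be an A-ring with a right grouplike character. Then A is projective as a right R-module if and only if there exists q ∈ Q = R^R such that χ(q) = 1_A. -/
import Mathlib


open MulOpposite

/-- Let `(R, i, χ)` be an `A`-ring with a right grouplike character,
and regard `A` as a right `R`-module (a left `Rᵐᵒᵖ`-module) via `a ↼ r = χ (i a * r)`.
Then `A` is projective as a right `R`-module if and only if there exists
`q ∈ Q = R^R` with `χ q = 1`. -/
theorem projective_iff_exists_q
    {A R : Type*} [Ring A] [Ring R] (i : A →+* R) (χ : R →+ A)
    (hχA : ∀ (r : R) (a : A), χ (r * i a) = χ r * a)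
    (hχmul : ∀ r s : R, χ (i (χ r) * s) = χ (r * s))
    (hχone : χ (1 : R) = 1)
    [Module Rᵐᵒᵖ A]
    (hsmul : ∀ (r : R) (a : A), op r • a = χ (i a * r)) :
    Module.Projective Rᵐᵒᵖ A ↔
      ∃ q : R, (∀ r : R, q * r = q * i (χ r)) ∧ χ q = 1 := by
  have hχi : ∀ a : A, χ (i a) = a := by
    intro a
    have := hχA 1 a
    simpa [hχone] using this
  -- χ as an Rᵐᵒᵖ-linear map from R (with right multiplication action) to A
  let f : R →ₗ[Rᵐᵒᵖ] A :=
    { toFun := χ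
      map_add' := χ.map_add
      map_smul' := by
        intro m x
        simp only [RingHom.id_apply]
        rw [← op_unop m, hsmul (unop m) (χ x), hχmul]
        rfl }
  constructor
  · intro hP
    obtain ⟨h, hh⟩ := Module.projective_lifting_property f (LinearMap.id)
      (fun a => ⟨i a, hχi a⟩)
    refine ⟨h 1, ?_, ?_⟩
    · intro r
      have key : ∀ s : R, h (χ s) = h 1 * s := by
        intro s
        have h1 : h (op s • (1:A)) = op s • h 1 := h.map_smul _ _
        rw [hsmul, map_one i, one_mul] at h1
        rw [h1, op_smul_eq_mul]
      have e1 := key r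
      have e2 := key (i (χ r))
      rw [hχi] at e2
      rw [← e1, ← e2]
    · have := congrArg (fun g : A →ₗ[Rᵐᵒᵖ] A => g 1) hh
      simpa [f] using this
  · rintro ⟨q, hq, hq1⟩
    let σ : A →ₗ[Rᵐᵒᵖ] R :=
      { toFun := fun a => q * i a
        map_add' := by intro a b; simp [map_add, mul_add]
        map_smul' := by
          intro m a
          simp only [RingHom.id_apply]
          rw [← op_unop m, hsmul (unop m) a, ← hq (i a * unop m), op_smul_eq_mul, mul_assoc] }
    have hfree : Module.Projective Rᵐᵒᵖ R :=
      Module.Projective.of_equiv (MulOpposite.opLinearEquiv Rᵐᵒᵖ : R ≃ₗ[Rᵐᵒᵖ] Rᵐᵒᵖ).symm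
    refine Module.Projective.of_split (M := R) σ f ?_
    ext a
    simp only [LinearMap.comp_apply, LinearMap.id_apply, LinearMap.coe_mk, AddHom.coe_mk, σ, f]
    rw [hχA, hq1, one_mul]
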